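/- Fix ½ ≤ γ < ν ≤ 1 and 0 < μ < min[ν, ν²/γ − 3ν + 2]. For t ≤ 1 and r > 0, the function v₀(r,t) = ((1−t)_+ + r^{2ν})^{ν/(2γ)} / r^ν satisfies Δ_ν v₀ := (∂_r² + r^{-1}∂_r − ν² r^{-2}) v₀ ≤ 0, i.e. v₀ is a supersolution of the elliptic operator Δ_ν. Explicitly, Δ_ν v₀ = (ν³/γ²) v₀ · r^{4ν−2}(ν − 2γ)/((1−t) + r^{2ν})² ≤ 0. -/

import Mathlib

set_option maxHeartbeats 1000000

noncomputable def v0fun (ν γ t r : ℝ) : ℝ :=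
  (max (1 - t) 0 + r ^ (2 * ν)) ^ (ν / (2 * γ)) / r ^ ν

lemma v0_deriv (ν γ t x : ℝ) (hγ0 : 0 < γ) (hx : 0 < x) :
    HasDerivAt (v0fun ν γ t)
      (ν ^ 2 / γ * ((max (1 - t) 0 + x ^ (2 * ν)) ^ (ν / (2 * γ) - 1) * x ^ (ν - 1))
        - ν * ((max (1 - t) 0 + x ^ (2 * ν)) ^ (ν / (2 * γ)) * x ^ (-ν - 1))) x := by
  set c := max (1 - t) 0 with hc
  have hc0 : (0:ℝ) ≤ c := le_max_right _ _
  have hx' : x ≠ 0 := hx.ne'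
  have hX : 0 < x ^ (2 * ν) := Real.rpow_pos_of_pos hx _
  have hA : 0 < c + x ^ (2 * ν) := by positivity
  have h1 : HasDerivAt (fun y : ℝ => c + y ^ (2 * ν)) (2 * ν * x ^ (2 * ν - 1)) x :=
    (Real.hasDerivAt_rpow_const (Or.inl hx')).const_add c
  have h2 := h1.rpow_const (p := ν / (2 * γ)) (Or.inl hA.ne')
  have h3 : HasDerivAt (fun y : ℝ => y ^ ν) (ν * x ^ (ν - 1)) x :=
    Real.hasDerivAt_rpow_const (Or.inl hx')
  have hxν : (0:ℝ) < x ^ ν := Real.rpow_pos_of_pos hx ν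
  have h4 := h2.div h3 hxν.ne'
  have e1 : x ^ (2 * ν - 1) = x ^ (2 * ν) / x := by
    rw [Real.rpow_sub hx, Real.rpow_one]
  have e2 : x ^ (ν - 1) = x ^ ν / x := by rw [Real.rpow_sub hx, Real.rpow_one]
  have e3 : x ^ (-ν - 1) = 1 / (x ^ ν * x) := by
    rw [show -ν - 1 = -(ν + 1) by ring, Real.rpow_neg hx.le, Real.rpow_add hx,
      Real.rpow_one, one_div]
  have e4 : x ^ (2 * ν) = (x ^ ν) ^ 2 := by
    rw [← Real.rpow_natCast (x ^ ν) 2, ← Real.rpow_mul hx.le]; ring_nf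
  have e5 : (c + x ^ (2 * ν)) ^ (ν / (2 * γ) - 1)
      = (c + x ^ (2 * ν)) ^ (ν / (2 * γ)) / (c + x ^ (2 * ν)) := by
    rw [Real.rpow_sub hA, Real.rpow_one]
  refine HasDerivAt.congr_deriv h4 (Eq.symm ?_)
  rw [e1, e2, e3, e5]
  have hγ' : (2:ℝ) * γ ≠ 0 := by positivity
  field_simp
  rw [mul_comm ν 2, e4]

theorem stmt13 (γ ν μ t r : ℝ) (hγ : 1 / 2 ≤ γ) (hγν : γ < ν) (hν : ν ≤ 1)
    (hμ0 : 0 < μ) (hμ : μ < min ν (ν ^ 2 / γ - 3 * ν + 2))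
    (ht : t ≤ 1) (hr : 0 < r) :
    deriv (deriv (v0fun ν γ t)) r + r⁻¹ * deriv (v0fun ν γ t) r
        - ν ^ 2 / r ^ 2 * v0fun ν γ t r =
      ν ^ 3 / γ ^ 2 * v0fun ν γ t r *
        (r ^ (4 * ν - 2) * (ν - 2 * γ) / (max (1 - t) 0 + r ^ (2 * ν)) ^ 2) ∧
    deriv (deriv (v0fun ν γ t)) r + r⁻¹ * deriv (v0fun ν γ t) r
        - ν ^ 2 / r ^ 2 * v0fun ν γ t r ≤ 0 := by
  have hγ0 : (0:ℝ) < γ := lt_of_lt_of_le (by norm_num) hγ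
  have hν0 : (0:ℝ) < ν := hγ0.trans hγν
  set c := max (1 - t) 0 with hc
  have hc0 : (0:ℝ) ≤ c := le_max_right _ _
  set g : ℝ → ℝ := fun y =>
    ν ^ 2 / γ * ((c + y ^ (2 * ν)) ^ (ν / (2 * γ) - 1) * y ^ (ν - 1))
      - ν * ((c + y ^ (2 * ν)) ^ (ν / (2 * γ)) * y ^ (-ν - 1)) with hg
  -- deriv f = g on a neighborhood of r
  have hd1 : deriv (v0fun ν γ t) r = g r := (v0_deriv ν γ t r hγ0 hr).deriv
  have hEv : deriv (v0fun ν γ t) =ᶠ[nhds r] g := by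
    filter_upwards [Ioi_mem_nhds hr] with x hx
    exact (v0_deriv ν γ t x hγ0 hx).deriv
  -- second derivative
  have hr' : r ≠ 0 := hr.ne'
  have hX : 0 < r ^ (2 * ν) := Real.rpow_pos_of_pos hr _
  have hA : 0 < c + r ^ (2 * ν) := by positivity
  have h1 : HasDerivAt (fun y : ℝ => c + y ^ (2 * ν)) (2 * ν * r ^ (2 * ν - 1)) r :=
    (Real.hasDerivAt_rpow_const (Or.inl hr')).const_add c
  have h5 := h1.rpow_const (p := ν / (2 * γ) - 1) (Or.inl hA.ne')
  have h2 := h1.rpow_const (p := ν / (2 * γ)) (Or.inl hA.ne')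
  have h6 : HasDerivAt (fun y : ℝ => y ^ (ν - 1)) ((ν - 1) * r ^ (ν - 1 - 1)) r :=
    Real.hasDerivAt_rpow_const (Or.inl hr')
  have h7 : HasDerivAt (fun y : ℝ => y ^ (-ν - 1)) ((-ν - 1) * r ^ (-ν - 1 - 1)) r :=
    Real.hasDerivAt_rpow_const (Or.inl hr')
  have hg' : HasDerivAt g
      (ν ^ 2 / γ *
        (2 * ν * r ^ (2 * ν - 1) * (ν / (2 * γ) - 1)
            * (c + r ^ (2 * ν)) ^ (ν / (2 * γ) - 1 - 1) * r ^ (ν - 1)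
          + (c + r ^ (2 * ν)) ^ (ν / (2 * γ) - 1) * ((ν - 1) * r ^ (ν - 1 - 1)))
        - ν *
        (2 * ν * r ^ (2 * ν - 1) * (ν / (2 * γ))
            * (c + r ^ (2 * ν)) ^ (ν / (2 * γ) - 1) * r ^ (-ν - 1)
          + (c + r ^ (2 * ν)) ^ (ν / (2 * γ)) * ((-ν - 1) * r ^ (-ν - 1 - 1)))) r :=
    ((h5.mul h6).const_mul (ν ^ 2 / γ)).sub ((h2.mul h7).const_mul ν)
  have hd2 : deriv (deriv (v0fun ν γ t)) r = deriv g r := hEv.deriv_eq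
  rw [hd1, hd2, hg'.deriv]
  -- rewrite all rpow powers in basic terms
  have hXν : (0:ℝ) < r ^ ν := Real.rpow_pos_of_pos hr ν
  have e1 : r ^ (2 * ν - 1) = (r ^ ν) ^ 2 / r := by
    rw [Real.rpow_sub hr, Real.rpow_one, ← Real.rpow_natCast (r ^ ν) 2,
      ← Real.rpow_mul hr.le]; ring_nf
  have e2 : r ^ (ν - 1) = r ^ ν / r := by rw [Real.rpow_sub hr, Real.rpow_one]
  have e3 : r ^ (-ν - 1) = 1 / (r ^ ν * r) := by
    rw [show -ν - 1 = -(ν + 1) by ring, Real.rpow_neg hr.le, Real.rpow_add hr,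
      Real.rpow_one, one_div]
  have e4 : r ^ (2 * ν) = (r ^ ν) ^ 2 := by
    rw [← Real.rpow_natCast (r ^ ν) 2, ← Real.rpow_mul hr.le]; ring_nf
  have e6 : r ^ (ν - 1 - 1) = r ^ ν / r ^ 2 := by
    rw [show ν - 1 - 1 = ν - ((2:ℕ):ℝ) by push_cast; ring, Real.rpow_sub hr,
      Real.rpow_natCast]
  have e7 : r ^ (-ν - 1 - 1) = 1 / (r ^ ν * r ^ 2) := by
    rw [show -ν - 1 - 1 = -(ν + ((2:ℕ):ℝ)) by push_cast; ring, Real.rpow_neg hr.le,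
      Real.rpow_add hr, Real.rpow_natCast, one_div]
  have e8 : r ^ (4 * ν - 2) = (r ^ ν) ^ 4 / r ^ 2 := by
    rw [show 4 * ν - 2 = ν * ((4:ℕ):ℝ) - ((2:ℕ):ℝ) by push_cast; ring,
      Real.rpow_sub hr, Real.rpow_mul hr.le, Real.rpow_natCast, Real.rpow_natCast]
  have e5 : (c + r ^ (2 * ν)) ^ (ν / (2 * γ) - 1)
      = (c + r ^ (2 * ν)) ^ (ν / (2 * γ)) / (c + r ^ (2 * ν)) := by
    rw [Real.rpow_sub hA, Real.rpow_one]
  have e9 : (c + r ^ (2 * ν)) ^ (ν / (2 * γ) - 1 - 1)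
      = (c + r ^ (2 * ν)) ^ (ν / (2 * γ)) / (c + r ^ (2 * ν)) ^ 2 := by
    rw [show ν / (2 * γ) - 1 - 1 = ν / (2 * γ) - ((2:ℕ):ℝ) by push_cast; ring,
      Real.rpow_sub hA, Real.rpow_natCast]
  have hZ : (0:ℝ) < (c + r ^ (2 * ν)) ^ (ν / (2 * γ)) := Real.rpow_pos_of_pos hA _
  have hmain : ν ^ 2 / γ *
        (2 * ν * r ^ (2 * ν - 1) * (ν / (2 * γ) - 1)
            * (c + r ^ (2 * ν)) ^ (ν / (2 * γ) - 1 - 1) * r ^ (ν - 1)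
          + (c + r ^ (2 * ν)) ^ (ν / (2 * γ) - 1) * ((ν - 1) * r ^ (ν - 1 - 1)))
        - ν *
        (2 * ν * r ^ (2 * ν - 1) * (ν / (2 * γ))
            * (c + r ^ (2 * ν)) ^ (ν / (2 * γ) - 1) * r ^ (-ν - 1)
          + (c + r ^ (2 * ν)) ^ (ν / (2 * γ)) * ((-ν - 1) * r ^ (-ν - 1 - 1)))
        + r⁻¹ * g r - ν ^ 2 / r ^ 2 * v0fun ν γ t r =
      ν ^ 3 / γ ^ 2 * v0fun ν γ t r *
        (r ^ (4 * ν - 2) * (ν - 2 * γ) / (c + r ^ (2 * ν)) ^ 2) := by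
    rw [hg]
    simp only [v0fun, ← hc]
    rw [e1, e2, e3, e5, e6, e7, e8, e9]
    set A := c + r ^ (2 * ν) with hAdef
    set Z := A ^ (ν / (2 * γ)) with hZdef
    set X := r ^ ν with hXdef
    have hγ' : γ ≠ 0 := hγ0.ne'
    have hA0 : A ≠ 0 := hA.ne'
    have hX0 : X ≠ 0 := hXν.ne'
    field_simp
    ring
  refine ⟨hmain, ?_⟩
  rw [hmain]
  have hns : ν - 2 * γ ≤ 0 := by nlinarith
  have hv0 : 0 ≤ v0fun ν γ t r := by
    simp only [v0fun]; positivity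
  apply mul_nonpos_of_nonneg_of_nonpos
  · positivity
  · apply div_nonpos_of_nonpos_of_nonneg
    · exact mul_nonpos_of_nonneg_of_nonpos (Real.rpow_pos_of_pos hr _).le hns
    · positivity
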